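/- Fix real numbers f, x, p, D₀ with 1 − p − p²·D₀ ≠ 0, and set Γ = f/(1 − p − p²·D₀) and Λ = Γ − f − p·x. Define R(n) = Γⁿ/n! for n ∈ ℕ. Then for every n ∈ ℕ: [p·(−x + n) + p²·D₀·n]·R(n) + f·R(n−1) + (n+1)·R(n+1) − (f + n)·R(n) = Λ·R(n), where the term f·R(n−1) is omitted (set to zero) when n = 0. -/

import Mathlib

/-- Verification of the trial eigenvector ansatz `R(n) = Γⁿ/n!` for the principal
eigenvalue of the hybrid operator of the Poisson-type model: with
`Γ = f/(1 − p − p² D₀)` and `Λ = Γ − f − p x`, the eigenvalue equation holds for all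
`n ∈ ℕ` (with the term `f·R(n−1)` omitted when `n = 0`). -/
theorem poisson_trial_eigenvector_eigenvalue_equation
    (f x p D₀ : ℝ) (hden : 1 - p - p ^ 2 * D₀ ≠ 0)
    (Γ Λ : ℝ) (hΓ : Γ = f / (1 - p - p ^ 2 * D₀)) (hΛ : Λ = Γ - f - p * x)
    (R : ℕ → ℝ) (hR : ∀ n, R n = Γ ^ n / (n.factorial : ℝ)) :
    ∀ n : ℕ,
      (p * (-x + (n : ℝ)) + p ^ 2 * D₀ * (n : ℝ)) * R n
        + f * (if n = 0 then 0 else R (n - 1))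
        + ((n : ℝ) + 1) * R (n + 1)
        - (f + (n : ℝ)) * R n
      = Λ * R n := by
  have hf : f = Γ * (1 - p - p ^ 2 * D₀) := by
    rw [hΓ, div_mul_cancel₀ _ hden]
  intro n
  cases n with
  | zero =>
      simp only [hR, hΛ, hf]
      norm_num [Nat.factorial]
      ring
  | succ m =>
      have hfac : ∀ k : ℕ, ((k.factorial : ℝ)) ≠ 0 := fun k =>
        Nat.cast_ne_zero.mpr k.factorial_ne_zero
      simp only [hR, hΛ, hf, Nat.succ_sub_one, if_neg (Nat.succ_ne_zero m)]
      have h1 : (m + 1).factorial = (m + 1) * m.factorial := Nat.factorial_succ m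
      have h2 : (m + 2).factorial = (m + 2) * (m + 1).factorial := Nat.factorial_succ (m + 1)
      push_cast [h1, h2]
      field_simp
      ring
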